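/- Let x be an idempotent (x*x = x), fix r ≤ k, and let u ∈ S satisfy ⟨p_s, u⟩ = δ_{sr} for all s ≤ k. If x(u + e_1^{(r)}) ≠ 0 and x(u + e_2^{(r)}) ≠ 0, then x(u) = 0. (This is the point-level content of case (2.2) of Theorem 7.1: if for some ray p_r ∉ γ both Demazure roots e_1^{(r)}, e_2^{(r)} lie in γ^⊥, then the torus orbit O_γ contains no idempotents.) -/
import Mathlib


open Finset

def pairZ {n : ℕ} (v u : Fin n → ℤ) : ℤ := ∑ i, v i * u i

def InS {n m : ℕ} (q : Fin m → Fin n → ℤ) (u : Fin n → ℤ) : Prop :=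
  ∀ j, 0 ≤ pairZ (q j) u

def IsPoint {n m : ℕ} {K : Type*} [Field K] (q : Fin m → Fin n → ℤ)
    (x : (Fin n → ℤ) → K) : Prop :=
  x 0 = 1 ∧ ∀ u v : Fin n → ℤ, InS q u → InS q v → x (u + v) = x u * x v

def Compatible {n m k : ℕ} (hkm : k ≤ m) (q : Fin m → Fin n → ℤ)
    (e : Fin k → Fin n → ℤ) : Prop :=
  (∀ r s : Fin k, pairZ (q (Fin.castLE hkm s)) (e r) = if r = s then -1 else 0) ∧
  (∀ (r : Fin k) (j : Fin m), k ≤ (j : ℕ) → 0 ≤ pairZ (q j) (e r))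

noncomputable def rmul {n m k : ℕ} {K : Type*} [Field K] (hkm : k ≤ m)
    (q : Fin m → Fin n → ℤ) (e1 e2 : Fin k → Fin n → ℤ)
    (x y : (Fin n → ℤ) → K) : (Fin n → ℤ) → K :=
  fun u =>
    ∑ i ∈ Fintype.piFinset (fun r : Fin k =>
        Finset.range ((pairZ (q (Fin.castLE hkm r)) u).toNat + 1)),
      (∏ r : Fin k, ((pairZ (q (Fin.castLE hkm r)) u).toNat.choose (i r) : K)) *
        x (u + ∑ r : Fin k, (i r : ℤ) • e2 r) *
        y (u + ∑ r : Fin k, (pairZ (q (Fin.castLE hkm r)) u - (i r : ℤ)) • e1 r)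

noncomputable def xtau {n m k : ℕ} (K : Type*) [Field K] (hkm : k ≤ m)
    (q : Fin m → Fin n → ℤ) : (Fin n → ℤ) → K :=
  fun u => if ∀ r : Fin k, pairZ (q (Fin.castLE hkm r)) u = 0 then 1 else 0

lemma pairZ_add {n : ℕ} (v a b : Fin n → ℤ) :
    pairZ v (a + b) = pairZ v a + pairZ v b := by
  simp [pairZ, mul_add, Finset.sum_add_distrib]

theorem statement_13 {n m k : ℕ} {K : Type*} [Field K] [CharZero K]
    (hn : 1 ≤ n) (hk : 1 ≤ k) (hkm : k ≤ m)
    (q : Fin m → Fin n → ℤ) (e1 e2 : Fin k → Fin n → ℤ)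
    (he1 : Compatible hkm q e1) (he2 : Compatible hkm q e2)
    (x : (Fin n → ℤ) → K) (hx : IsPoint q x)
    (hid : ∀ u : Fin n → ℤ, InS q u → rmul hkm q e1 e2 x x u = x u)
    (r : Fin k) (u : Fin n → ℤ) (hu : InS q u)
    (hdel : ∀ s : Fin k, pairZ (q (Fin.castLE hkm s)) u = if s = r then 1 else 0)
    (h1 : x (u + e1 r) ≠ 0) (h2 : x (u + e2 r) ≠ 0) :
    x u = 0 := by
  -- membership of u + e r in S
  have hSe : ∀ (e : Fin k → Fin n → ℤ), Compatible hkm q e → InS q (u + e r) := by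
    intro e he j
    rcases lt_or_ge (j : ℕ) k with hj | hj
    · set s : Fin k := ⟨j, hj⟩ with hs
      have hcast : Fin.castLE hkm s = j := by ext; rfl
      rw [← hcast, pairZ_add, hdel s, he.1 r s]
      by_cases h : s = r
      · simp [h]
      · simp [h, Ne.symm h]
    · rw [pairZ_add]
      exact add_nonneg (hu j) (he.2 r j hj)
  -- pairings vanish at u + e r
  have hze : ∀ (e : Fin k → Fin n → ℤ), Compatible hkm q e →
      ∀ s : Fin k, pairZ (q (Fin.castLE hkm s)) (u + e r) = 0 := by
    intro e he s
    rw [pairZ_add, hdel s, he.1 r s]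
    by_cases h : s = r
    · simp [h]
    · simp [h, Ne.symm h]
  -- rmul at a point with vanishing pairings
  have hA : ∀ v : Fin n → ℤ, (∀ s : Fin k, pairZ (q (Fin.castLE hkm s)) v = 0) →
      rmul hkm q e1 e2 x x v = x v * x v := by
    intro v hz
    unfold rmul
    have ht : ∀ s : Fin k, (pairZ (q (Fin.castLE hkm s)) v).toNat = 0 := by
      intro s; rw [hz s]; rfl
    rw [Finset.sum_eq_single (fun _ => (0:ℕ))]
    · simp [ht, hz]
    · intro i hi hne
      exfalso; apply hne; funext s
      have := Fintype.mem_piFinset.mp hi s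
      simpa [ht s] using this
    · intro h
      exfalso; apply h
      simp [Fintype.mem_piFinset, ht]
  -- x = 1 at u + e1 r, u + e2 r
  have hone : ∀ (e : Fin k → Fin n → ℤ), Compatible hkm q e →
      x (u + e r) ≠ 0 → x (u + e r) = 1 := by
    intro e he hne
    have := hid (u + e r) (hSe e he)
    rw [hA _ (hze e he)] at this
    exact mul_right_cancel₀ hne (by rw [one_mul]; exact this)
  have hv1 := hone e1 he1 h1
  have hv2 := hone e2 he2 h2
  -- compute rmul at u
  have htu : ∀ s : Fin k, (pairZ (q (Fin.castLE hkm s)) u).toNat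
      = if s = r then 1 else 0 := by
    intro s; rw [hdel s]; by_cases h : s = r <;> simp [h]
  have hset : Fintype.piFinset (fun s : Fin k =>
      Finset.range ((pairZ (q (Fin.castLE hkm s)) u).toNat + 1)) =
      ({fun _ => 0, fun s => if s = r then 1 else 0} : Finset (Fin k → ℕ)) := by
    ext i
    simp only [Fintype.mem_piFinset, Finset.mem_range, Finset.mem_insert,
      Finset.mem_singleton]
    constructor
    · intro h
      by_cases hir : i r = 0
      · left; funext s
        have := h s; rw [htu s] at this
        by_cases hs : s = r
        · subst hs; exact hir
        · simp [hs] at this; omega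
      · right; funext s
        have := h s; rw [htu s] at this
        by_cases hs : s = r
        · subst hs; simp at this ⊢; omega
        · simp [hs] at this ⊢; omega
    · rintro (rfl | rfl) s <;> rw [htu s] <;> by_cases hs : s = r <;> simp [hs]
  have hne01 : (fun _ => 0 : Fin k → ℕ) ≠ (fun s => if s = r then 1 else 0) := by
    intro h
    have := congrFun h r
    simp at this
  have key := hid u hu
  unfold rmul at key
  rw [hset, Finset.sum_pair hne01] at key
  have hs1 : (∑ s : Fin k, (((0:ℕ)):ℤ) • e2 s) = 0 := by simp
  have hs2 : (∑ s : Fin k, (pairZ (q (Fin.castLE hkm s)) u - ((0:ℕ):ℤ)) • e1 s)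
      = e1 r := by
    simp only [Nat.cast_zero, sub_zero]
    rw [Finset.sum_congr rfl (fun s _ => by rw [hdel s])]
    simp [ite_smul, Finset.sum_ite_eq']
  have hs3 : (∑ s : Fin k, (((if s = r then 1 else 0 : ℕ)):ℤ) • e2 s) = e2 r := by
    simp [apply_ite (Nat.cast : ℕ → ℤ), ite_smul, Finset.sum_ite_eq']
  have hs4 : (∑ s : Fin k, (pairZ (q (Fin.castLE hkm s)) u
      - ((if s = r then 1 else 0 : ℕ):ℤ)) • e1 s) = 0 := by
    have hz : ∀ s : Fin k, pairZ (q (Fin.castLE hkm s)) u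
        - ((if s = r then 1 else 0 : ℕ):ℤ) = 0 := by
      intro s; rw [hdel s]; by_cases h : s = r <;> simp [h]
    rw [Finset.sum_congr rfl (fun s _ => by rw [hz s, zero_smul])]
    simp
  have hc1 : (∏ s : Fin k, (((pairZ (q (Fin.castLE hkm s)) u).toNat.choose
      ((fun _ => (0:ℕ)) s) : K))) = 1 := by
    apply Finset.prod_eq_one; intro s _
    rw [htu s]; by_cases h : s = r <;> simp [h]
  have hc2 : (∏ s : Fin k, (((pairZ (q (Fin.castLE hkm s)) u).toNat.choose
      ((fun s => if s = r then (1:ℕ) else 0) s) : K))) = 1 := by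
    apply Finset.prod_eq_one; intro s _
    rw [htu s]; by_cases h : s = r <;> simp [h]
  simp only [hc1, hc2] at key
  rw [hs1, hs2, hs3, hs4] at key
  simp only [add_zero, one_mul] at key
  rw [hv1, hv2] at key
  linear_combination key
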